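/- Let l, k > 0 and v ∈ (0, k), and let E_v = {(x,y) ∈ ℝ² : k²x² + l²y² − 2l(k−2v)xy − 2lkv·x − 2l²v·y + l²v² = 0}. Set a(v)² = 2l²(k−v)v / (k² + l² − √((k²+l²)² − 16l²(k−v)v)) and b(v)² = 2l²(k−v)v / (k² + l² + √((k²+l²)² − 16l²(k−v)v)). Then there exist a point c ∈ ℝ² and an angle θ ∈ ℝ such that E_v = {c + a·cos t·(cos θ, sin θ) + b·sin t·(−sin θ, cos θ) : t ∈ ℝ}, where a = √(a(v)²) and b = √(b(v)²); that is, a(v) and b(v) are the lengths of the semi-major and semi-minor axes of E_v. -/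

import Mathlib

lemma circle_param (x y : ℝ) (h : x^2 + y^2 = 1) : ∃ t : ℝ, Real.cos t = x ∧ Real.sin t = y := by
  have habs : ‖(⟨x, y⟩ : ℂ)‖ = 1 := by
    rw [Complex.norm_def, Complex.normSq_mk]
    rw [show x*x + y*y = 1 by nlinarith]
    exact Real.sqrt_one
  have hz : (⟨x, y⟩ : ℂ) ≠ 0 := by
    intro h0; rw [h0] at habs; simp at habs
  refine ⟨Complex.arg ⟨x, y⟩, ?_, ?_⟩
  · rw [Complex.cos_arg hz, habs]; simp
  · rw [Complex.sin_arg, habs]; simp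


lemma exists_eigvec (A B C lam1 lam2 d : ℝ) (hd0 : 0 ≤ d)
    (hd2 : d^2 = (A-C)^2 + 4*B^2)
    (h1 : lam1 = (A+C-d)/2) (h2 : lam2 = (A+C+d)/2) :
    ∃ c₁ s₁ : ℝ, c₁^2 + s₁^2 = 1 ∧
      A*c₁^2 + 2*B*c₁*s₁ + C*s₁^2 = lam1 ∧
      A*s₁^2 - 2*B*c₁*s₁ + C*c₁^2 = lam2 ∧
      B*(c₁^2 - s₁^2) + (C - A)*c₁*s₁ = 0 := by
  rcases eq_or_ne B 0 with hB | hB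
  · have hd : d = |A - C| := by
      rw [← Real.sqrt_sq hd0, hd2, hB]
      rw [show (A-C)^2 + 4*0^2 = (A-C)^2 by ring, Real.sqrt_sq_eq_abs]
    rcases le_total A C with hAC | hAC
    · have : d = C - A := by rw [hd, abs_of_nonpos (by linarith)]; ring
      exact ⟨1, 0, by ring, by rw [h1, this, hB]; ring, by rw [h2, this, hB]; ring,
        by rw [hB]; ring⟩
    · have : d = A - C := by rw [hd, abs_of_nonneg (by linarith)]
      exact ⟨0, 1, by ring, by rw [h1, this, hB]; ring, by rw [h2, this, hB]; ring,
        by rw [hB]; ring⟩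
  · have hB2 : 0 < B^2 := by positivity
    have hchar : lam1^2 - (A+C)*lam1 + (A*C - B^2) = 0 := by
      rw [h1]; linear_combination hd2/4
    have hn2 : 0 < B^2 + (lam1 - A)^2 := by positivity
    set n := Real.sqrt (B^2 + (lam1 - A)^2) with hn
    have hn0 : 0 < n := Real.sqrt_pos.mpr hn2
    have hnsq : n^2 = B^2 + (lam1 - A)^2 := Real.sq_sqrt (le_of_lt hn2)
    have hne : n ≠ 0 := hn0.ne'
    have hsum : lam2 = A + C - lam1 := by rw [h1, h2]; ring
    refine ⟨B/n, (lam1 - A)/n, ?_, ?_, ?_, ?_⟩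
    · rw [div_pow, div_pow, ← add_div, div_eq_one_iff_eq (by positivity)]
      rw [hnsq]
    · rw [show A*(B/n)^2 + 2*B*(B/n)*((lam1-A)/n) + C*((lam1-A)/n)^2
        = (A*B^2 + 2*B^2*(lam1-A) + C*(lam1-A)^2)/n^2 by field_simp,
        div_eq_iff (by positivity)]
      linear_combination (A - lam1) * hchar - lam1 * hnsq
    · rw [hsum, show A*((lam1-A)/n)^2 - 2*B*(B/n)*((lam1-A)/n) + C*(B/n)^2
        = (A*(lam1-A)^2 - 2*B^2*(lam1-A) + C*B^2)/n^2 by field_simp,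
        div_eq_iff (by positivity)]
      linear_combination (lam1 - A) * hchar - (A + C - lam1) * hnsq
    · rw [show B*((B/n)^2 - ((lam1-A)/n)^2) + (C-A)*(B/n)*((lam1-A)/n)
        = (B*(B^2 - (lam1-A)^2) + (C-A)*B*(lam1-A))/n^2 by field_simp,
        div_eq_iff (by positivity)]
      linear_combination (-B) * hchar

lemma ellipse_param (A B C R c₁ s₁ lam1 lam2 a b cx cy : ℝ)
    (hunit : c₁^2 + s₁^2 = 1)
    (hQ1 : A*c₁^2 + 2*B*c₁*s₁ + C*s₁^2 = lam1)
    (hQ2 : A*s₁^2 - 2*B*c₁*s₁ + C*c₁^2 = lam2)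
    (hX : B*(c₁^2 - s₁^2) + (C - A)*c₁*s₁ = 0)
    (hl1 : 0 < lam1) (hl2 : 0 < lam2) (hR : 0 < R)
    (ha : a = Real.sqrt (R / lam1)) (hb : b = Real.sqrt (R / lam2)) :
    {p : ℝ × ℝ | A*(p.1-cx)^2 + 2*B*(p.1-cx)*(p.2-cy) + C*(p.2-cy)^2 = R} =
    {q : ℝ × ℝ | ∃ t : ℝ, q = (cx, cy) + (a * Real.cos t) • (c₁, s₁)
        + (b * Real.sin t) • (-s₁, c₁)} := by
  have ha0 : 0 < a := by rw [ha]; exact Real.sqrt_pos.mpr (by positivity)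
  have hb0 : 0 < b := by rw [hb]; exact Real.sqrt_pos.mpr (by positivity)
  have ha2 : lam1 * a^2 = R := by
    rw [ha, Real.sq_sqrt (by positivity)]; field_simp
  have hb2 : lam2 * b^2 = R := by
    rw [hb, Real.sq_sqrt (by positivity)]; field_simp
  ext p
  simp only [Set.mem_setOf_eq, Prod.ext_iff, Prod.fst_add, Prod.snd_add, Prod.smul_fst,
    Prod.smul_snd, smul_eq_mul]
  constructor
  · intro h
    set x := p.1 - cx with hxdef
    set y := p.2 - cy with hydef
    set s := c₁*x + s₁*y with hsdef
    set w := c₁*y - s₁*x with hwdef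
    have hx : c₁*s - s₁*w = x := by rw [hsdef, hwdef]; linear_combination x * hunit
    have hy : s₁*s + c₁*w = y := by rw [hsdef, hwdef]; linear_combination y * hunit
    have hsw : lam1 * s^2 + lam2 * w^2 = R := by
      rw [← hx, ← hy] at h
      linear_combination h - s^2 * hQ1 - 2*s*w*hX - w^2 * hQ2
    have key2 : s^2*b^2 + a^2*w^2 = a^2*b^2 := by
      apply mul_left_cancel₀ hR.ne'
      linear_combination a^2*b^2*hsw - s^2*b^2*ha2 - a^2*w^2*hb2
    have hcirc : (s/a)^2 + (w/b)^2 = 1 := by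
      field_simp
      linear_combination key2
    obtain ⟨t, hct, hst⟩ := circle_param _ _ hcirc
    have has : a * (s/a) = s := by field_simp
    have hbw : b * (w/b) = w := by field_simp
    refine ⟨t, ?_, ?_⟩
    · rw [hct, hst]
      field_simp
      linear_combination (a*b) * hx - (p.1-cx)*(1+a*b)*hunit
    · rw [hct, hst]
      field_simp
      linear_combination (a*b) * hy - (p.2-cy)*(1+a*b)*hunit
  · rintro ⟨t, h1, h2⟩
    have h_t : Real.cos t^2 + Real.sin t^2 = 1 := Real.cos_sq_add_sin_sq t
    rw [h1, h2]
    linear_combination (a*Real.cos t)^2 * hQ1 + 2*a*Real.cos t*b*Real.sin t*hX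
      + (b*Real.sin t)^2 * hQ2 + Real.cos t^2 * ha2 + Real.sin t^2 * hb2 + R * h_t


theorem stmt_2 (l k v : ℝ) (hl : 0 < l) (hk : 0 < k) (hv : v ∈ Set.Ioo (0 : ℝ) k)
    (a b : ℝ)
    (ha : a = Real.sqrt (2 * l ^ 2 * (k - v) * v /
      (k ^ 2 + l ^ 2 - Real.sqrt ((k ^ 2 + l ^ 2) ^ 2 - 16 * l ^ 2 * (k - v) * v))))
    (hb : b = Real.sqrt (2 * l ^ 2 * (k - v) * v /
      (k ^ 2 + l ^ 2 + Real.sqrt ((k ^ 2 + l ^ 2) ^ 2 - 16 * l ^ 2 * (k - v) * v)))) :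
    ∃ (c : ℝ × ℝ) (θ : ℝ),
      {p : ℝ × ℝ |
        k ^ 2 * p.1 ^ 2 + l ^ 2 * p.2 ^ 2 - 2 * l * (k - 2 * v) * p.1 * p.2
          - 2 * l * k * v * p.1 - 2 * l ^ 2 * v * p.2 + l ^ 2 * v ^ 2 = 0} =
      {q : ℝ × ℝ | ∃ t : ℝ,
        q = c + (a * Real.cos t) • (Real.cos θ, Real.sin θ)
              + (b * Real.sin t) • (-Real.sin θ, Real.cos θ)} := by
  obtain ⟨hv1, hv2⟩ := hv
  have hD0 : 0 ≤ (k ^ 2 + l ^ 2) ^ 2 - 16 * l ^ 2 * (k - v) * v := by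
    nlinarith [sq_nonneg (k^2 - l^2), sq_nonneg (l*(k-2*v))]
  set d := Real.sqrt ((k ^ 2 + l ^ 2) ^ 2 - 16 * l ^ 2 * (k - v) * v) with hdd
  have hd0 : 0 ≤ d := Real.sqrt_nonneg _
  have hdsq : d^2 = (k ^ 2 + l ^ 2) ^ 2 - 16 * l ^ 2 * (k - v) * v := Real.sq_sqrt hD0
  have hd2 : d^2 = (k^2 - l^2)^2 + 4*(-(l*(k-2*v)))^2 := by rw [hdsq]; ring
  have hRpos : 0 < l^2*v*(k-v) := by
    have : 0 < k - v := by linarith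
    positivity
  have hl1 : 0 < (k^2 + l^2 - d)/2 := by nlinarith [hdsq]
  have hl2 : 0 < (k^2 + l^2 + d)/2 := by positivity
  obtain ⟨c₁, s₁, hu, h1, h2, h3⟩ := exists_eigvec (k^2) (-(l*(k-2*v))) (l^2)
    ((k^2 + l^2 - d)/2) ((k^2 + l^2 + d)/2) d hd0 hd2 (by ring) (by ring)
  obtain ⟨θ, hcθ, hsθ⟩ := circle_param c₁ s₁ hu
  refine ⟨(l/2, k/2), θ, ?_⟩
  rw [hcθ, hsθ]
  have ha' : a = Real.sqrt ((l^2*v*(k-v)) / ((k^2 + l^2 - d)/2)) := by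
    rw [ha]; congr 1
    rw [div_div_eq_mul_div]
    ring
  have hb' : b = Real.sqrt ((l^2*v*(k-v)) / ((k^2 + l^2 + d)/2)) := by
    rw [hb]; congr 1
    rw [div_div_eq_mul_div]
    ring
  have hset := ellipse_param (k^2) (-(l*(k-2*v))) (l^2) (l^2*v*(k-v)) c₁ s₁
    ((k^2 + l^2 - d)/2) ((k^2 + l^2 + d)/2) a b (l/2) (k/2)
    hu h1 h2 h3 hl1 hl2 hRpos ha' hb'
  rw [← hset]
  ext p
  simp only [Set.mem_setOf_eq]
  constructor <;> intro hp <;> linear_combination hp
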